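/- arXiv:1305.1681 — 2 statements merged into one kernel-verified Lean document; each statement's English description precedes it below -/
import Mathlib

section
/- Let G=(V,w) be a weighted graph that is a γ-stable instance of Max Cut (γ ≥ 1) with maximum cut (S,S̄). Then for every subset A of V with ∅ ≠ A ≠ V: w(E(S,S̄) ∩ E(A,Ā)) > γ·w(E(A,Ā) ∖ E(S,S̄)). (That is, every nontrivial cut (A,Ā) cuts strictly more than γ times as much weight of maximum-cut edges as of non-maximum-cut edges.) -/
open Finset

/-- The pair `{u, v}` is separated by the cut `(S, V∖S)`. -/
abbrev cutSep {V : Type*} (S : Finset V) (u v : V) : Prop :=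
  (u ∈ S ∧ v ∉ S) ∨ (v ∈ S ∧ u ∉ S)

/-- Total weight of the set of unordered pairs `{u,v}` satisfying the symmetric
predicate `P`; the sum over ordered pairs counts each unordered pair twice, whence
the division by `2`. -/
noncomputable def cutWeight {V : Type*} [Fintype V] (w : V → V → ℝ)
    (P : V → V → Prop) : ℝ :=
  have := Classical.propDecidable
  (∑ u, ∑ v, if P u v then w u v else 0) / 2

/-- `G = (V, w)` is a `γ`-stable instance of Max Cut with maximum cut `(S, V∖S)`:
for every cut `(T, V∖T)` different from `(S, V∖S)`,
`w(E(S,S̄)∖E(T,T̄)) > γ·w(E(T,T̄)∖E(S,S̄))`. -/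
def IsMaxCutStable {V : Type*} [Fintype V] [DecidableEq V]
    (w : V → V → ℝ) (γ : ℝ) (S : Finset V) : Prop :=
  ∀ T : Finset V, T ≠ S → T ≠ Sᶜ →
    γ * cutWeight w (fun u v => cutSep T u v ∧ ¬ cutSep S u v) <
      cutWeight w (fun u v => cutSep S u v ∧ ¬ cutSep T u v)

lemma cutWeight_congr {V : Type*} [Fintype V] (w : V → V → ℝ)
    (P Q : V → V → Prop) (h : ∀ u v, P u v ↔ Q u v) :
    cutWeight w P = cutWeight w Q := by
  unfold cutWeight
  have hPQ : P = Q := by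
    funext u v; exact propext (h u v)
  rw [hPQ]

/-- If `G = (V, w)` is a `γ`-stable instance of Max Cut (`γ ≥ 1`)
with maximum cut `(S, S̄)`, then for every subset `A` of `V` with `∅ ≠ A ≠ V`:
`w(E(S,S̄) ∩ E(A,Ā)) > γ·w(E(A,Ā) ∖ E(S,S̄))`. -/
theorem stmt1 {V : Type*} [Fintype V] [DecidableEq V]
    (w : V → V → ℝ) (hsymm : ∀ u v, w u v = w v u) (hnonneg : ∀ u v, 0 ≤ w u v)
    (γ : ℝ) (hγ : 1 ≤ γ) (S : Finset V)
    (hstable : IsMaxCutStable w γ S) :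
    ∀ A : Finset V, A ≠ ∅ → A ≠ Finset.univ →
      γ * cutWeight w (fun u v => cutSep A u v ∧ ¬ cutSep S u v) <
        cutWeight w (fun u v => cutSep S u v ∧ cutSep A u v) := by
  intro A hA0 hA1
  set T : Finset V := symmDiff S A with hT
  have memT : ∀ x : V, x ∈ T ↔ ((x ∈ S ∧ x ∉ A) ∨ (x ∈ A ∧ x ∉ S)) := by
    intro x; simp [hT, Finset.mem_symmDiff]
  have hTS : T ≠ S := by
    intro h
    rw [hT, symmDiff_eq_left] at h
    exact hA0 h
  have hTSc : T ≠ Sᶜ := by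
    intro h
    apply hA1
    have h2 : symmDiff S A = symmDiff S (univ : Finset V) := by
      rw [← hT, h]
      ext x; simp [Finset.mem_symmDiff]
    exact symmDiff_right_injective S h2
  have key := hstable T hTS hTSc
  have e1 : cutWeight w (fun u v => cutSep T u v ∧ ¬ cutSep S u v)
      = cutWeight w (fun u v => cutSep A u v ∧ ¬ cutSep S u v) := by
    apply cutWeight_congr
    intro u v
    simp only [cutSep, memT]
    by_cases h1 : u ∈ S <;> by_cases h2 : v ∈ S <;>
      by_cases h3 : u ∈ A <;> by_cases h4 : v ∈ A <;>
      simp [h1, h2, h3, h4]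
  have e2 : cutWeight w (fun u v => cutSep S u v ∧ ¬ cutSep T u v)
      = cutWeight w (fun u v => cutSep S u v ∧ cutSep A u v) := by
    apply cutWeight_congr
    intro u v
    simp only [cutSep, memT]
    by_cases h1 : u ∈ S <;> by_cases h2 : v ∈ S <;>
      by_cases h3 : u ∈ A <;> by_cases h4 : v ∈ A <;>
      simp [h1, h2, h3, h4]
  rw [e1, e2] at key
  exact key
end

section
/- Let V₀ be a finite set with n = |V₀| ≥ 2, let cap and dem be symmetric nonnegative functions on unordered pairs of distinct points of V₀, let γ ≥ 1, and suppose there are unit vectors {ū_u : u ∈ V₀} in a real inner product space such that the set {ū_u, −ū_u : u ∈ V₀} satisfies the ℓ2²-triangle inequalities and: (i) for every A ⊆ V₀ with ∅ ≠ A ≠ V₀, cap(E_c(A,Ā)) > γ·dem(E_d(A,Ā)); and (ii) Σ over pairs of cap(u,v)·‖ū_u − ū_v‖² < Σ over pairs of dem(u,v)·‖ū_u − ū_v‖². Let G on V = V₀×{1,2} be the graph from the reduction from Sparsest Cut to Max Cut with W∞ > γ·Σ over pairs of (2·cap(u,v) + 2·dem(u,v)), and S = V₀×{1}. Then G is a γ-stable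 instance of Max Cut with maximum cut (S,S̄), and the assignment x_{u₁} = ū_u, x_{u₂} = −ū_u is a feasible solution of the Goemans–Williamson SDP relaxation with triangle inequalities whose objective value is strictly greater than w(E(S,S̄)); consequently the SDP relaxation for G is not integral. -/
open Finset

/-- The reduction from Sparsest Cut to Max Cut: the graph on `V₀ × {1,2}` (here
`V₀ × Bool`, side "1" being `false`) with `w(u₁,v₂) = w(u₂,v₁) = cap(u,v)`,
`w(u₁,v₁) = w(u₂,v₂) = dem(u,v)` for `u ≠ v`, and `w(u₁,u₂) = W∞`. -/
noncomputable def reductionWeight {V₀ : Type*} [DecidableEq V₀]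
    (cap dem : V₀ → V₀ → ℝ) (Winf : ℝ) :
    V₀ × Bool → V₀ × Bool → ℝ :=
  fun p q =>
    if p.1 = q.1 then (if p.2 = q.2 then 0 else Winf)
    else (if p.2 = q.2 then dem p.1 q.1 else cap p.1 q.1)

section myAux

variable {V : Type*} [Fintype V]

lemma myCutWeight_eq (w : V → V → ℝ) (P : V → V → Prop) [∀ u v, Decidable (P u v)] :
    cutWeight w P = (∑ u, ∑ v, if P u v then w u v else 0) / 2 := by
  show (∑ u, ∑ v, @ite _ (P u v) (Classical.propDecidable _) (w u v) 0) / 2 = _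
  congr 1
  refine Finset.sum_congr rfl fun u _ => Finset.sum_congr rfl fun v _ => ?_
  by_cases h : P u v
  · rw [if_pos h, if_pos h]
  · rw [if_neg h, if_neg h]

lemma myCutWeight_nonneg (w : V → V → ℝ) (hw : ∀ u v, 0 ≤ w u v) (P : V → V → Prop) :
    0 ≤ cutWeight w P := by
  classical
  rw [myCutWeight_eq]
  have : (0:ℝ) ≤ ∑ u, ∑ v, if P u v then w u v else 0 :=
    Finset.sum_nonneg fun u _ => Finset.sum_nonneg fun v _ => by
      split
      · exact hw u v
      · exact le_rfl
  linarith

lemma myCutWeight_congr (w : V → V → ℝ) {P Q : V → V → Prop} (h : ∀ u v, P u v ↔ Q u v) :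
    cutWeight w P = cutWeight w Q := by
  classical
  rw [myCutWeight_eq, myCutWeight_eq]
  congr 1
  refine Finset.sum_congr rfl fun u _ => Finset.sum_congr rfl fun v _ => ?_
  by_cases hp : P u v
  · rw [if_pos hp, if_pos ((h u v).mp hp)]
  · rw [if_neg hp, if_neg (fun hq => hp ((h u v).mpr hq))]

lemma myCutWeight_split (w : V → V → ℝ) (P Q : V → V → Prop) :
    cutWeight w P =
      cutWeight w (fun u v => P u v ∧ Q u v) + cutWeight w (fun u v => P u v ∧ ¬ Q u v) := by
  classical
  rw [myCutWeight_eq, myCutWeight_eq, myCutWeight_eq, ← add_div]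
  congr 1
  rw [← Finset.sum_add_distrib]
  refine Finset.sum_congr rfl fun u _ => ?_
  rw [← Finset.sum_add_distrib]
  refine Finset.sum_congr rfl fun v _ => ?_
  by_cases hp : P u v
  · by_cases hq : Q u v
    · rw [if_pos hp, if_pos ⟨hp, hq⟩, if_neg (fun h : P u v ∧ ¬ Q u v => h.2 hq), add_zero]
    · rw [if_pos hp, if_neg (fun h : P u v ∧ Q u v => hq h.2), if_pos ⟨hp, hq⟩, zero_add]
  · rw [if_neg hp, if_neg (fun h : P u v ∧ Q u v => hp h.1),
      if_neg (fun h : P u v ∧ ¬ Q u v => hp h.1), add_zero]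

lemma mySum_prod_bool {V₀ : Type*} [Fintype V₀] (f : V₀ × Bool → V₀ × Bool → ℝ) :
    ∑ p, ∑ q, f p q =
      ∑ u, ∑ v, (f (u,false) (v,false) + f (u,false) (v,true)
        + f (u,true) (v,false) + f (u,true) (v,true)) := by
  rw [Fintype.sum_prod_type]
  simp only [Fintype.sum_bool, Fintype.sum_prod_type]
  refine Finset.sum_congr rfl fun u _ => ?_
  rw [← Finset.sum_add_distrib]
  refine Finset.sum_congr rfl fun v _ => ?_
  ring

lemma mySum2_congr {V₀ : Type*} [Fintype V₀] {f g : V₀ → V₀ → ℝ}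
    (h : ∀ u v, f u v = g u v) : ∑ u, ∑ v, f u v = ∑ u, ∑ v, g u v :=
  Finset.sum_congr rfl fun u _ => Finset.sum_congr rfl fun v _ => h u v

end myAux

set_option maxHeartbeats 1000000

/-- Suppose unit vectors `{ū_u : u ∈ V₀}` are such that `{±ū_u}` satisfies
the `ℓ2²`-triangle inequalities, every nontrivial cut of `V₀` satisfies
`cap(E_c(A,Ā)) > γ·dem(E_d(A,Ā))`, and `Σ cap·‖ū_u − ū_v‖² < Σ dem·‖ū_u − ū_v‖²`.
Then the graph `G` of the reduction (with `W∞ > γ·Σ(2cap + 2dem)`) is a `γ`-stable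
instance of Max Cut with maximum cut `(S, S̄)`, `S = V₀ × {1}`, and the assignment
`x_{u₁} = ū_u`, `x_{u₂} = −ū_u` is a feasible SDP solution whose objective value strictly
exceeds `w(E(S,S̄))`; consequently the SDP relaxation for `G` is not integral (every
integral solution has value strictly below the objective value of `x`). -/
theorem stmt8 {V₀ : Type*} [Fintype V₀] [DecidableEq V₀]
    {H : Type*} [NormedAddCommGroup H] [InnerProductSpace ℝ H]
    (hcard : 2 ≤ Fintype.card V₀)
    (cap dem : V₀ → V₀ → ℝ)
    (hcaps : ∀ u v, cap u v = cap v u) (hdems : ∀ u v, dem u v = dem v u)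
    (hcapn : ∀ u v, 0 ≤ cap u v) (hdemn : ∀ u v, 0 ≤ dem u v)
    (hcap0 : ∀ u, cap u u = 0) (hdem0 : ∀ u, dem u u = 0)
    (γ : ℝ) (hγ : 1 ≤ γ)
    (ubar : V₀ → H) (hunit : ∀ u, ‖ubar u‖ = 1)
    (htri : ∀ x ∈ {y : H | ∃ u, y = ubar u ∨ y = -ubar u},
            ∀ y ∈ {y : H | ∃ u, y = ubar u ∨ y = -ubar u},
            ∀ z ∈ {y : H | ∃ u, y = ubar u ∨ y = -ubar u},
              ‖x - y‖ ^ 2 + ‖y - z‖ ^ 2 ≥ ‖x - z‖ ^ 2)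
    (hsparse : ∀ A : Finset V₀, A ≠ ∅ → A ≠ Finset.univ →
      γ * cutWeight dem (cutSep A) < cutWeight cap (cutSep A))
    (hvec : (∑ u, ∑ v, cap u v * ‖ubar u - ubar v‖ ^ 2) / 2 <
            (∑ u, ∑ v, dem u v * ‖ubar u - ubar v‖ ^ 2) / 2)
    (Winf : ℝ)
    (hW : γ * ((∑ u, ∑ v, (2 * cap u v + 2 * dem u v)) / 2) < Winf)
    (x : V₀ × Bool → H)
    (hx : ∀ p : V₀ × Bool, x p = if p.2 = false then ubar p.1 else -ubar p.1) :
    IsMaxCutStable (reductionWeight cap dem Winf) γ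
        (Finset.univ.filter (fun p : V₀ × Bool => p.2 = false)) ∧
    (∀ p, ‖x p‖ = 1) ∧
    (∀ a ∈ {y : H | ∃ p, y = x p ∨ y = -x p},
     ∀ b ∈ {y : H | ∃ p, y = x p ∨ y = -x p},
     ∀ c ∈ {y : H | ∃ p, y = x p ∨ y = -x p},
       ‖a - b‖ ^ 2 + ‖b - c‖ ^ 2 ≥ ‖a - c‖ ^ 2) ∧
    cutWeight (reductionWeight cap dem Winf)
        (cutSep (Finset.univ.filter (fun p : V₀ × Bool => p.2 = false))) <
      ((∑ p, ∑ q, reductionWeight cap dem Winf p q * ‖x p - x q‖ ^ 2) / 2) / 4 ∧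
    (∀ T : Finset (V₀ × Bool),
      cutWeight (reductionWeight cap dem Winf) (cutSep T) <
        ((∑ p, ∑ q, reductionWeight cap dem Winf p q * ‖x p - x q‖ ^ 2) / 2) / 4) := by
  classical
  set S : Finset (V₀ × Bool) := Finset.univ.filter (fun p : V₀ × Bool => p.2 = false)
    with hSdef
  set w' : V₀ × Bool → V₀ × Bool → ℝ := reductionWeight cap dem Winf with hw'def
  -- basic facts
  have hSmem : ∀ p : V₀ × Bool, p ∈ S ↔ p.2 = false := by
    intro p; simp [hSdef]
  have hSsep : ∀ p q : V₀ × Bool, cutSep S p q ↔ p.2 ≠ q.2 := by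
    intro p q
    simp only [cutSep, hSmem]
    cases hp : p.2 <;> cases hq : q.2 <;> simp
  have hxf : ∀ u : V₀, x (u, false) = ubar u := fun u => by rw [hx]; simp
  have hxt : ∀ u : V₀, x (u, true) = -ubar u := fun u => by rw [hx]; simp
  have hw_ff : ∀ u v : V₀, w' (u,false) (v,false) = if u = v then 0 else dem u v := by
    intro u v; simp [hw'def, reductionWeight]
  have hw_tt : ∀ u v : V₀, w' (u,true) (v,true) = if u = v then 0 else dem u v := by
    intro u v; simp [hw'def, reductionWeight]
  have hw_ft : ∀ u v : V₀, w' (u,false) (v,true) = if u = v then Winf else cap u v := by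
    intro u v; simp [hw'def, reductionWeight]
  have hw_tf : ∀ u v : V₀, w' (u,true) (v,false) = if u = v then Winf else cap u v := by
    intro u v; simp [hw'def, reductionWeight]
  have hXnn : (0:ℝ) ≤ (∑ u, ∑ v, (2 * cap u v + 2 * dem u v)) / 2 := by
    apply div_nonneg _ (by norm_num)
    refine Finset.sum_nonneg fun u _ => Finset.sum_nonneg fun v _ => ?_
    have := hcapn u v; have := hdemn u v; linarith
  have hγ0 : (0:ℝ) ≤ γ := by linarith
  have hWpos : 0 < Winf := lt_of_le_of_lt (mul_nonneg hγ0 hXnn) hW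
  have hwnn : ∀ p q : V₀ × Bool, 0 ≤ w' p q := by
    intro p q
    simp only [hw'def, reductionWeight]
    split_ifs
    · exact le_rfl
    · exact hWpos.le
    · exact hdemn _ _
    · exact hcapn _ _
  -- the stability claim
  have hstab : IsMaxCutStable w' γ S := by
    intro T hT1 hT2
    by_cases hall : ∀ u : V₀, ((u, false) ∈ T ↔ ¬ (u, true) ∈ T)
    · -- T corresponds to a cut (A, Aᶜ) of V₀
      set A : Finset V₀ := Finset.univ.filter (fun u => (u, false) ∈ T) with hAdef
      have hAm : ∀ u : V₀, u ∈ A ↔ (u, false) ∈ T := by intro u; simp [hAdef]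
      have hBm : ∀ u : V₀, (u, true) ∈ T ↔ u ∉ A := by
        intro u
        rw [hAm]
        obtain ⟨h1, h2⟩ := hall u
        constructor
        · intro ht hf; exact h1 hf ht
        · intro hf; by_contra ht; exact hf (h2 ht)
      have hAne : A ≠ ∅ := by
        intro h
        apply hT2
        ext p
        obtain ⟨u, i⟩ := p
        rw [Finset.mem_compl, hSmem]
        cases i
        · constructor
          · intro hmem
            have hu : u ∈ A := (hAm u).mpr hmem
            rw [h] at hu
            exact absurd hu (Finset.notMem_empty u)
          · intro hmem; exact absurd rfl hmem
        · constructor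
          · intro _; simp
          · intro _
            apply (hBm u).mpr
            rw [h]; exact Finset.notMem_empty u
      have hAnu : A ≠ Finset.univ := by
        intro h
        apply hT1
        ext p
        obtain ⟨u, i⟩ := p
        rw [hSmem]
        cases i
        · simp only [iff_true]
          exact (hAm u).mp (by rw [h]; exact Finset.mem_univ u)
        · simp only [Bool.true_eq_false, iff_false]
          intro hmem
          exact ((hBm u).mp hmem) (by rw [h]; exact Finset.mem_univ u)
      have e1 : cutWeight w' (fun p q => cutSep T p q ∧ ¬ cutSep S p q)
          = 2 * cutWeight dem (cutSep A) := by
        rw [myCutWeight_eq, myCutWeight_eq, mySum_prod_bool, ← mul_div_assoc]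
        congr 1
        rw [Finset.mul_sum]
        refine Finset.sum_congr rfl fun u _ => ?_
        rw [Finset.mul_sum]
        refine Finset.sum_congr rfl fun v _ => ?_
        have hnsff : ¬ cutSep S (u,false) (v,false) := by rw [hSsep]; simp
        have hnstt : ¬ cutSep S (u,true) (v,true) := by rw [hSsep]; simp
        have hsft : cutSep S (u,false) (v,true) := by rw [hSsep]; simp
        have hstf : cutSep S (u,true) (v,false) := by rw [hSsep]; simp
        rw [if_neg (fun h : cutSep T (u,false) (v,true) ∧ ¬ cutSep S (u,false) (v,true) =>
            h.2 hsft),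
          if_neg (fun h : cutSep T (u,true) (v,false) ∧ ¬ cutSep S (u,true) (v,false) =>
            h.2 hstf)]
        have hTff : cutSep T (u,false) (v,false) ↔ cutSep A u v := by
          simp only [cutSep, ← hAm]
        have hTtt : cutSep T (u,true) (v,true) ↔ cutSep A u v := by
          simp only [cutSep, hBm, not_not]
          constructor <;> rintro (⟨h1, h2⟩ | ⟨h1, h2⟩)
          exacts [Or.inr ⟨h2, h1⟩, Or.inl ⟨h2, h1⟩, Or.inr ⟨h2, h1⟩, Or.inl ⟨h2, h1⟩]
        by_cases hA : cutSep A u v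
        · rw [if_pos (And.intro (hTff.mpr hA) hnsff), if_pos (And.intro (hTtt.mpr hA) hnstt),
            if_pos hA, hw_ff, hw_tt]
          have huv : ¬ u = v := by
            intro h; subst h
            rcases hA with ⟨h1, h2⟩ | ⟨h1, h2⟩ <;> exact h2 h1
          rw [if_neg huv]; ring
        · rw [if_neg (fun h : cutSep T (u,false) (v,false) ∧ ¬ cutSep S (u,false) (v,false) =>
              hA (hTff.mp h.1)),
            if_neg (fun h : cutSep T (u,true) (v,true) ∧ ¬ cutSep S (u,true) (v,true) =>
              hA (hTtt.mp h.1)),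
            if_neg hA]; ring
      have e2 : cutWeight w' (fun p q => cutSep S p q ∧ ¬ cutSep T p q)
          = 2 * cutWeight cap (cutSep A) := by
        rw [myCutWeight_eq, myCutWeight_eq, mySum_prod_bool, ← mul_div_assoc]
        congr 1
        rw [Finset.mul_sum]
        refine Finset.sum_congr rfl fun u _ => ?_
        rw [Finset.mul_sum]
        refine Finset.sum_congr rfl fun v _ => ?_
        have hnsff : ¬ cutSep S (u,false) (v,false) := by rw [hSsep]; simp
        have hnstt : ¬ cutSep S (u,true) (v,true) := by rw [hSsep]; simp
        have hsft : cutSep S (u,false) (v,true) := by rw [hSsep]; simp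
        have hstf : cutSep S (u,true) (v,false) := by rw [hSsep]; simp
        rw [if_neg (fun h : cutSep S (u,false) (v,false) ∧ ¬ cutSep T (u,false) (v,false) =>
            hnsff h.1),
          if_neg (fun h : cutSep S (u,true) (v,true) ∧ ¬ cutSep T (u,true) (v,true) =>
            hnstt h.1)]
        have hft : cutSep T (u,false) (v,true) ↔ ((u ∈ A ∧ v ∈ A) ∨ (u ∉ A ∧ v ∉ A)) := by
          simp only [cutSep, ← hAm, hBm, not_not]
          constructor <;> rintro (⟨h1, h2⟩ | ⟨h1, h2⟩)
          exacts [Or.inl ⟨h1, h2⟩, Or.inr ⟨h2, h1⟩, Or.inl ⟨h1, h2⟩, Or.inr ⟨h2, h1⟩]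
        have htf : cutSep T (u,true) (v,false) ↔ ((u ∈ A ∧ v ∈ A) ∨ (u ∉ A ∧ v ∉ A)) := by
          simp only [cutSep, ← hAm, hBm, not_not]
          constructor <;> rintro (⟨h1, h2⟩ | ⟨h1, h2⟩)
          exacts [Or.inr ⟨h1, h2⟩, Or.inl ⟨h2, h1⟩, Or.inr ⟨h2, h1⟩, Or.inl ⟨h1, h2⟩]
        have hTft : ¬ cutSep T (u,false) (v,true) ↔ cutSep A u v := by
          rw [hft]
          by_cases hu : u ∈ A <;> by_cases hv : v ∈ A <;> simp [cutSep, hu, hv]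
        have hTtf : ¬ cutSep T (u,true) (v,false) ↔ cutSep A u v := by
          rw [htf]
          by_cases hu : u ∈ A <;> by_cases hv : v ∈ A <;> simp [cutSep, hu, hv]
        by_cases hA : cutSep A u v
        · have huv : ¬ u = v := by
            intro h; subst h
            rcases hA with ⟨h1, h2⟩ | ⟨h1, h2⟩ <;> exact h2 h1
          rw [if_pos (And.intro hsft (hTft.mpr hA)), if_pos (And.intro hstf (hTtf.mpr hA)),
            if_pos hA, hw_ft, hw_tf, if_neg huv]; ring
        · rw [if_neg (fun h : cutSep S (u,false) (v,true) ∧ ¬ cutSep T (u,false) (v,true) =>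
              hA (hTft.mp h.2)),
            if_neg (fun h : cutSep S (u,true) (v,false) ∧ ¬ cutSep T (u,true) (v,false) =>
              hA (hTtf.mp h.2)),
            if_neg hA]; ring
      rw [e1, e2]
      have h := hsparse A hAne hAnu
      linarith
    · -- some vertex is not split by T; the Winf edge wins
      rw [not_forall] at hall
      obtain ⟨u₀, hu₀⟩ := hall
      have hnc : ¬ cutSep T (u₀, false) (u₀, true) := by
        rintro (⟨h1, h2⟩ | ⟨h1, h2⟩)
        · exact hu₀ ⟨fun _ => h2, fun _ => h1⟩
        · exact hu₀ ⟨fun hf => (h2 hf).elim, fun hnt => (hnt h1).elim⟩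
      have hnc' : ¬ cutSep T (u₀, true) (u₀, false) := by
        rintro (⟨h1, h2⟩ | ⟨h1, h2⟩)
        · exact hu₀ ⟨fun hf => (h2 hf).elim, fun hnt => (hnt h1).elim⟩
        · exact hu₀ ⟨fun _ => h2, fun _ => h1⟩
      -- upper bound on the demand side
      have hs1b : cutWeight w' (fun p q => cutSep T p q ∧ ¬ cutSep S p q)
          ≤ ∑ u, ∑ v, dem u v := by
        rw [myCutWeight_eq, mySum_prod_bool, div_le_iff₀ (by norm_num : (0:ℝ) < 2)]
        have hb : ∀ u v : V₀,
            ((if cutSep T (u,false) (v,false) ∧ ¬ cutSep S (u,false) (v,false) then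
                w' (u,false) (v,false) else 0)
              + (if cutSep T (u,false) (v,true) ∧ ¬ cutSep S (u,false) (v,true) then
                w' (u,false) (v,true) else 0)
              + (if cutSep T (u,true) (v,false) ∧ ¬ cutSep S (u,true) (v,false) then
                w' (u,true) (v,false) else 0)
              + (if cutSep T (u,true) (v,true) ∧ ¬ cutSep S (u,true) (v,true) then
                w' (u,true) (v,true) else 0))
            ≤ dem u v * 2 := by
          intro u v
          have hsft : cutSep S (u,false) (v,true) := by rw [hSsep]; simp
          have hstf : cutSep S (u,true) (v,false) := by rw [hSsep]; simp
          rw [if_neg (fun h : cutSep T (u,false) (v,true) ∧ ¬ cutSep S (u,false) (v,true) =>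
              h.2 hsft),
            if_neg (fun h : cutSep T (u,true) (v,false) ∧ ¬ cutSep S (u,true) (v,false) =>
              h.2 hstf), hw_ff, hw_tt]
          have hd := hdemn u v
          have h1 : (if cutSep T (u,false) (v,false) ∧ ¬ cutSep S (u,false) (v,false) then
              (if u = v then (0:ℝ) else dem u v) else 0) ≤ dem u v := by
            split_ifs with h h'
            · subst h'; linarith [hdemn u u]
            · exact le_rfl
            · exact hd
          have h2 : (if cutSep T (u,true) (v,true) ∧ ¬ cutSep S (u,true) (v,true) then
              (if u = v then (0:ℝ) else dem u v) else 0) ≤ dem u v := by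
            split_ifs with h h'
            · subst h'; linarith [hdemn u u]
            · exact le_rfl
            · exact hd
          linarith
        refine le_trans
          (Finset.sum_le_sum fun u _ => Finset.sum_le_sum fun v _ => hb u v)
          (le_of_eq ?_)
        rw [Finset.sum_mul]
        exact Finset.sum_congr rfl fun u _ => (Finset.sum_mul _ _ _).symm
      -- lower bound on the other side
      have hs2 : Winf ≤ cutWeight w' (fun p q => cutSep S p q ∧ ¬ cutSep T p q) := by
        rw [myCutWeight_eq, le_div_iff₀ (by norm_num : (0:ℝ) < 2)]
        set g : V₀ × Bool → V₀ × Bool → ℝ :=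
          fun p q => if cutSep S p q ∧ ¬ cutSep T p q then w' p q else 0 with hgdef
        have hgnn : ∀ p q, 0 ≤ g p q := by
          intro p q
          simp only [hgdef]
          split
          · exact hwnn p q
          · exact le_rfl
        have h1 : ∀ p : V₀ × Bool, (0:ℝ) ≤ ∑ q, g p q :=
          fun p => Finset.sum_nonneg fun q _ => hgnn p q
        have h2 : g (u₀,false) (u₀,true) ≤ ∑ q, g (u₀,false) q :=
          Finset.single_le_sum (fun q _ => hgnn _ q) (Finset.mem_univ _)
        have h3 : g (u₀,true) (u₀,false) ≤ ∑ q, g (u₀,true) q :=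
          Finset.single_le_sum (fun q _ => hgnn _ q) (Finset.mem_univ _)
        have h4 : (∑ q, g (u₀,false) q) + (∑ q, g (u₀,true) q) ≤ ∑ p, ∑ q, g p q := by
          have hsub := Finset.sum_le_sum_of_subset_of_nonneg
            (s := ({(u₀,false), (u₀,true)} : Finset (V₀ × Bool)))
            (f := fun p => ∑ q, g p q)
            (Finset.subset_univ _) (fun p _ _ => h1 p)
          rwa [Finset.sum_pair (by simp)] at hsub
        have h5 : g (u₀,false) (u₀,true) = Winf := by
          have hcs : cutSep S (u₀,false) (u₀,true) := by rw [hSsep]; simp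
          simp only [hgdef]
          rw [if_pos (And.intro hcs hnc), hw_ft, if_pos rfl]
        have h6 : g (u₀,true) (u₀,false) = Winf := by
          have hcs : cutSep S (u₀,true) (u₀,false) := by rw [hSsep]; simp
          simp only [hgdef]
          rw [if_pos (And.intro hcs hnc'), hw_tf, if_pos rfl]
        linarith
      have hDle : ∑ u, ∑ v, dem u v ≤ (∑ u, ∑ v, (2 * cap u v + 2 * dem u v)) / 2 := by
        rw [le_div_iff₀ (by norm_num : (0:ℝ) < 2), Finset.sum_mul]
        refine Finset.sum_le_sum fun u _ => ?_
        rw [Finset.sum_mul]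
        refine Finset.sum_le_sum fun v _ => ?_
        linarith [hcapn u v]
      have hm1 := mul_le_mul_of_nonneg_left hs1b hγ0
      have hm2 := mul_le_mul_of_nonneg_left hDle hγ0
      linarith
  -- S is a maximum cut
  have hcutS_le : ∀ T : Finset (V₀ × Bool),
      cutWeight w' (cutSep T) ≤ cutWeight w' (cutSep S) := by
    intro T
    by_cases hT1 : T = S
    · subst hT1; exact le_rfl
    by_cases hT2 : T = Sᶜ
    · subst hT2
      apply le_of_eq
      apply myCutWeight_congr
      intro u v
      simp only [cutSep, Finset.mem_compl, not_not]
      constructor <;> rintro (⟨h1, h2⟩ | ⟨h1, h2⟩)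
      exacts [Or.inr ⟨h2, h1⟩, Or.inl ⟨h2, h1⟩, Or.inr ⟨h2, h1⟩, Or.inl ⟨h2, h1⟩]
    · have h := hstab T hT1 hT2
      have e1 := myCutWeight_split w' (cutSep T) (cutSep S)
      have e2 := myCutWeight_split w' (cutSep S) (cutSep T)
      have e3 : cutWeight w' (fun u v => cutSep T u v ∧ cutSep S u v)
          = cutWeight w' (fun u v => cutSep S u v ∧ cutSep T u v) :=
        myCutWeight_congr _ fun u v => and_comm
      have hnn : 0 ≤ cutWeight w' (fun u v => cutSep T u v ∧ ¬ cutSep S u v) :=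
        myCutWeight_nonneg _ hwnn _
      have hle : cutWeight w' (fun u v => cutSep T u v ∧ ¬ cutSep S u v)
          ≤ γ * cutWeight w' (fun u v => cutSep T u v ∧ ¬ cutSep S u v) :=
        le_mul_of_one_le_left hnn hγ
      linarith
  -- the SDP objective value beats the maximum cut
  have hpar : ∀ u v : V₀, ‖ubar u + ubar v‖ ^ 2 = 4 - ‖ubar u - ubar v‖ ^ 2 := by
    intro u v
    have h1 := norm_add_sq_real (ubar u) (ubar v)
    have h2 := norm_sub_sq_real (ubar u) (ubar v)
    rw [hunit, hunit] at h1 h2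
    linarith
  have hL : cutWeight w' (cutSep S) = ∑ u, ∑ v, (if u = v then Winf else cap u v) := by
    rw [myCutWeight_eq, mySum_prod_bool, div_eq_iff (by norm_num : (2:ℝ) ≠ 0),
      Finset.sum_mul]
    refine Finset.sum_congr rfl fun u _ => ?_
    rw [Finset.sum_mul]
    refine Finset.sum_congr rfl fun v _ => ?_
    have hnsff : ¬ cutSep S (u,false) (v,false) := by rw [hSsep]; simp
    have hnstt : ¬ cutSep S (u,true) (v,true) := by rw [hSsep]; simp
    have hsft : cutSep S (u,false) (v,true) := by rw [hSsep]; simp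
    have hstf : cutSep S (u,true) (v,false) := by rw [hSsep]; simp
    rw [if_neg hnsff, if_neg hnstt, if_pos hsft, if_pos hstf, hw_ft, hw_tf]
    ring
  have hR : ∑ p, ∑ q, w' p q * ‖x p - x q‖ ^ 2
      = 2 * (∑ u, ∑ v, dem u v * ‖ubar u - ubar v‖ ^ 2)
        - 2 * (∑ u, ∑ v, cap u v * ‖ubar u - ubar v‖ ^ 2)
        + 8 * (∑ u, ∑ v, (if u = v then Winf else cap u v)) := by
    rw [mySum_prod_bool]
    have hpt : ∀ u v : V₀,
        (w' (u,false) (v,false) * ‖x (u,false) - x (v,false)‖ ^ 2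
          + w' (u,false) (v,true) * ‖x (u,false) - x (v,true)‖ ^ 2
          + w' (u,true) (v,false) * ‖x (u,true) - x (v,false)‖ ^ 2
          + w' (u,true) (v,true) * ‖x (u,true) - x (v,true)‖ ^ 2)
        = 2 * (dem u v * ‖ubar u - ubar v‖ ^ 2) - 2 * (cap u v * ‖ubar u - ubar v‖ ^ 2)
          + 8 * (if u = v then Winf else cap u v) := by
      intro u v
      rw [hxf, hxf, hxt, hxt, hw_ff, hw_ft, hw_tf, hw_tt]
      have n1 : ‖-ubar u - -ubar v‖ = ‖ubar u - ubar v‖ := by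
        rw [neg_sub_neg, norm_sub_rev]
      have n2 : ubar u - -ubar v = ubar u + ubar v := sub_neg_eq_add _ _
      have n3 : ‖-ubar u - ubar v‖ = ‖ubar u + ubar v‖ := by
        have h : -ubar u - ubar v = -(ubar u + ubar v) := by abel
        rw [h, norm_neg]
      rw [n1, n2, n3, hpar]
      by_cases huv : u = v
      · subst huv
        rw [if_pos rfl, if_pos rfl, hdem0, hcap0]
        have hd0 : ‖ubar u - ubar u‖ ^ 2 = 0 := by simp
        rw [hd0]; ring
      · rw [if_neg huv, if_neg huv]; ring
    rw [mySum2_congr hpt]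
    simp only [Finset.sum_add_distrib, Finset.sum_sub_distrib, ← Finset.mul_sum]
  have hobj : cutWeight w' (cutSep S) <
      ((∑ p, ∑ q, w' p q * ‖x p - x q‖ ^ 2) / 2) / 4 := by
    rw [hL, hR]
    linarith
  -- assemble
  refine ⟨hstab, ?_, ?_, hobj, fun T => lt_of_le_of_lt (hcutS_le T) hobj⟩
  · intro p
    obtain ⟨u, i⟩ := p
    cases i
    · rw [hxf]; exact hunit u
    · rw [hxt, norm_neg]; exact hunit u
  · have hsub : {y : H | ∃ p, y = x p ∨ y = -x p} ⊆
        {y : H | ∃ u, y = ubar u ∨ y = -ubar u} := by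
      rintro y ⟨⟨u, i⟩, hy | hy⟩
      · cases i
        · exact ⟨u, Or.inl (by rw [hy, hxf])⟩
        · exact ⟨u, Or.inr (by rw [hy, hxt])⟩
      · cases i
        · exact ⟨u, Or.inr (by rw [hy, hxf])⟩
        · exact ⟨u, Or.inl (by rw [hy, hxt, neg_neg])⟩
    intro a ha b hb c hc
    exact htri a (hsub ha) b (hsub hb) c (hsub hc)
end
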